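/- Let R be a commutative ring in which 2 ≠ 0 and such that for every r ∈ R one has 2r = 0 if and only if r ∈ 2R (for example R = ℤ/4ℤ, or O/4O for the ring of integers O of a finite unramified extension of ℚ₂). Let G be a group and, for i = 1, 2, let Mᵢ = R × R be endowed with an R-linear G-action for which the submodule Lᵢ = R × {0} is G-stable, G acts on Lᵢ through a character aᵢ : G → Rˣ (i.e. g • (x, 0) = (aᵢ(g)·x, 0) for all x ∈ R), and G acts on the quotient Mᵢ/Lᵢ through a character dᵢ : G → Rˣ (i.e. the second coordinate of g • (x, y) is dᵢ(g)·y). Let φ : M₁ → M₂ be an R-linear G-equivariant bijection. If there exists σ₀ ∈ G with a₁(σ₀) = a₂(σ₀) = −1 and d₁(σ₀) = d₂(σ₀) = 1, then φ maps the set {m ∈ L₁ : 2m = 0} bijectively onto the set {m ∈ L₂ : 2m = 0}. -/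

import Mathlib

namespace SelmerCompanion

/-- Auxiliary: a linear map intertwining the two actions at a single suitable `σ₀`
maps the 2-torsion of the line into itself. -/
lemma mapsTo_aux (R : Type) [CommRing R] (G : Type) [Group G]
    (hdiv : ∀ r : R, 2 * r = 0 ↔ ∃ s : R, r = 2 * s)
    (ρ ρ' : Representation R G (R × R))
    (a d' : G →* Rˣ)
    (hL : ∀ (g : G) (x : R), ρ g (x, 0) = ((a g : R) * x, 0))
    (hd' : ∀ (g : G) (m : R × R), (ρ' g m).2 = (d' g : R) * m.2)
    (ψ : (R × R) →ₗ[R] (R × R))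
    (hψ : ∀ (g : G) (m : R × R), ψ (ρ g m) = ρ' g (ψ m))
    (σ₀ : G) (ha : (a σ₀ : R) = -1) (hd : (d' σ₀ : R) = 1) :
    Set.MapsTo ψ {m : R × R | m.2 = 0 ∧ (2 : R) • m = 0}
      {m : R × R | m.2 = 0 ∧ (2 : R) • m = 0} := by
  -- first show the second coordinate v of ψ (1,0) satisfies 2v = 0
  set v : R := (ψ (1, 0)).2 with hv
  have h2v : 2 * v = 0 := by
    have := congrArg Prod.snd (hψ σ₀ (1, 0))
    rw [hL σ₀ 1, hd' σ₀ (ψ (1, 0))] at this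
    simp only [ha, hd, one_mul, mul_one] at this
    -- this : (ψ (-1, 0)).2 = v
    have hneg : ((-1 : R), (0 : R)) = (-1 : R) • ((1 : R), (0 : R)) := by
      simp
    rw [hneg, map_smul] at this
    have : -v = v := by simpa using this
    linear_combination -this
  intro m hm
  obtain ⟨hm2, hm0⟩ := hm
  obtain ⟨x, y⟩ := m
  simp only [Set.mem_setOf_eq] at hm2 ⊢
  subst hm2
  have hx : 2 * x = 0 := by
    have := congrArg Prod.fst hm0
    simpa [two_mul, Prod.smul_def, smul_eq_mul] using this
  obtain ⟨s, hs⟩ := (hdiv x).mp hx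
  have hxy : ((x : R), (0 : R)) = x • ((1 : R), (0 : R)) := by simp
  constructor
  · rw [hxy, map_smul]
    have : (ψ (x • ((1 : R), (0 : R)))).2 = x * v := by
      rw [map_smul]; simp [Prod.smul_def, smul_eq_mul, hv]
    rw [map_smul] at this
    rw [show (x • ψ ((1:R), (0:R))).2 = x * v from by
      simp [Prod.smul_def, smul_eq_mul, hv]]
    rw [hs, mul_comm 2 s, mul_assoc, h2v, mul_zero]
  · rw [← map_smul, hm0, map_zero]

/-- Module-theoretic core of Lemma 3.5 (preservation of the 2-ordinary filtration).
Let `R` be a commutative ring with `2 ≠ 0` in which `2r = 0 ↔ r ∈ 2R`.  For `i = 1, 2` let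
`ρᵢ` be an `R`-linear `G`-action on `R × R` preserving the line `L = R × {0}`, acting on `L`
through a character `aᵢ : G → Rˣ` and on the quotient through a character `dᵢ : G → Rˣ`.
If `φ` is an `R`-linear `G`-equivariant bijection and there is `σ₀ ∈ G` with
`a₁ σ₀ = a₂ σ₀ = -1` and `d₁ σ₀ = d₂ σ₀ = 1`, then `φ` maps `{m ∈ L : 2m = 0}` bijectively
onto itself. -/
theorem statement0 (R : Type) [CommRing R] (G : Type) [Group G]
    (h2 : (2 : R) ≠ 0)
    (hdiv : ∀ r : R, 2 * r = 0 ↔ ∃ s : R, r = 2 * s)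
    (ρ₁ ρ₂ : Representation R G (R × R))
    (a₁ a₂ d₁ d₂ : G →* Rˣ)
    (hL₁ : ∀ (g : G) (x : R), ρ₁ g (x, 0) = ((a₁ g : R) * x, 0))
    (hL₂ : ∀ (g : G) (x : R), ρ₂ g (x, 0) = ((a₂ g : R) * x, 0))
    (hd₁ : ∀ (g : G) (m : R × R), (ρ₁ g m).2 = (d₁ g : R) * m.2)
    (hd₂ : ∀ (g : G) (m : R × R), (ρ₂ g m).2 = (d₂ g : R) * m.2)
    (φ : (R × R) ≃ₗ[R] (R × R))
    (hφ : ∀ (g : G) (m : R × R), φ (ρ₁ g m) = ρ₂ g (φ m))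
    (σ₀ : G)
    (ha₁ : (a₁ σ₀ : R) = -1) (ha₂ : (a₂ σ₀ : R) = -1)
    (hd₁σ : (d₁ σ₀ : R) = 1) (hd₂σ : (d₂ σ₀ : R) = 1) :
    Set.BijOn φ {m : R × R | m.2 = 0 ∧ (2 : R) • m = 0}
      {m : R × R | m.2 = 0 ∧ (2 : R) • m = 0} := by
  have hψ' : ∀ (g : G) (m : R × R), φ.symm (ρ₂ g m) = ρ₁ g (φ.symm m) := by
    intro g m
    apply φ.injective
    rw [hφ g (φ.symm m), φ.apply_symm_apply, φ.apply_symm_apply]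
  have hfwd := mapsTo_aux R G hdiv ρ₁ ρ₂ a₁ d₂ hL₁ hd₂ (φ : (R × R) →ₗ[R] (R × R))
    (by simpa using hφ) σ₀ ha₁ hd₂σ
  have hbwd := mapsTo_aux R G hdiv ρ₂ ρ₁ a₂ d₁ hL₂ hd₁ (φ.symm : (R × R) →ₗ[R] (R × R))
    (by simpa using hψ') σ₀ ha₂ hd₁σ
  refine ⟨hfwd, φ.injective.injOn, ?_⟩
  intro y hy
  exact ⟨φ.symm y, hbwd hy, φ.apply_symm_apply y⟩

end SelmerCompanion
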